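/- Let 𝒟 be a nonempty set of probability measures on ℝ that is tight and such that for all μ, μ̃ ∈ 𝒟 there exists ν ∈ 𝒟 with ν(−∞,t] ≤ min(μ(−∞,t], μ̃(−∞,t]) for all t. Then F̲(t) := inf_{μ ∈ 𝒟} μ(−∞,t] is a cumulative distribution function of a probability measure on ℝ (i.e., F̲ is nondecreasing, right-continuous, tends to 0 at −∞ and to 1 at +∞). -/

import Mathlib

open MeasureTheory Set Filter Topology ENNReal

noncomputable section

/-- `F̲(t) = inf_{μ ∈ 𝒟} μ(−∞,t]`. -/
def lowerCDF (D : Set (Measure ℝ)) (t : ℝ) : ℝ := (⨅ μ ∈ D, μ (Set.Iic t)).toReal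

/-- if `𝒟` is a nonempty tight set of probability measures on `ℝ` which is
downward directed in distribution, then `F̲(t) = inf_{μ ∈ 𝒟} μ(−∞,t]` is a cumulative
distribution function of a probability measure: nondecreasing, right-continuous, with limits
`0` at `−∞` and `1` at `+∞`. -/
theorem lowerCDF_is_CDF (D : Set (Measure ℝ)) (hne : D.Nonempty)
    (hprob : ∀ μ ∈ D, IsProbabilityMeasure μ)
    (htight : ∀ ε : ℝ≥0∞, 0 < ε → ∃ K : Set ℝ, IsCompact K ∧ ∀ μ ∈ D, μ Kᶜ ≤ ε)
    (hdir : ∀ μ ∈ D, ∀ μ' ∈ D, ∃ ν ∈ D, ∀ t : ℝ,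
      ν (Set.Iic t) ≤ min (μ (Set.Iic t)) (μ' (Set.Iic t))) :
    Monotone (lowerCDF D) ∧
    (∀ t : ℝ, ContinuousWithinAt (lowerCDF D) (Set.Ici t) t) ∧
    Tendsto (lowerCDF D) atBot (𝓝 0) ∧
    Tendsto (lowerCDF D) atTop (𝓝 1) := by
  obtain ⟨μ₀, hμ₀⟩ := hne
  set f : ℝ → ℝ≥0∞ := fun t => ⨅ μ ∈ D, μ (Set.Iic t) with hf
  have hle : ∀ t : ℝ, ∀ μ ∈ D, f t ≤ μ (Set.Iic t) := fun t μ hμ => biInf_le _ hμ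
  have hone : ∀ t : ℝ, f t ≤ 1 := fun t => by
    have := hprob μ₀ hμ₀
    exact (hle t μ₀ hμ₀).trans prob_le_one
  have hfin : ∀ t : ℝ, f t ≠ ⊤ := fun t => ((hone t).trans_lt one_lt_top).ne
  have hmonof : Monotone f := fun s t hst =>
    le_iInf₂ fun μ hμ => (hle s μ hμ).trans (measure_mono (Iic_subset_Iic.2 hst))
  have hmono : Monotone (lowerCDF D) := fun s t hst =>
    ENNReal.toReal_mono (hfin t) (hmonof hst)
  have hF : ∀ t : ℝ, lowerCDF D t = (f t).toReal := fun _ => rfl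
  have hFle : ∀ t : ℝ, ∀ μ ∈ D, lowerCDF D t ≤ (μ (Set.Iic t)).toReal := by
    intro t μ hμ
    haveI := hprob μ hμ
    exact ENNReal.toReal_mono (measure_ne_top μ _) (hle t μ hμ)
  have hFnonneg : ∀ t : ℝ, 0 ≤ lowerCDF D t := fun t => ENNReal.toReal_nonneg
  have hFone : ∀ t : ℝ, lowerCDF D t ≤ 1 := fun t => by
    rw [hF]
    exact ENNReal.toReal_le_of_le_ofReal zero_le_one (by simpa using hone t)
  -- existence of a near-optimal measure
  have hex : ∀ t : ℝ, ∀ b : ℝ, lowerCDF D t < b → ∃ μ ∈ D, (μ (Set.Iic t)).toReal < b := by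
    intro t b hb
    by_contra h
    push_neg at h
    have : ENNReal.ofReal b ≤ f t := le_iInf₂ fun μ hμ =>
      ENNReal.ofReal_le_of_le_toReal (h μ hμ)
    have hb0 : 0 ≤ b := le_of_lt ((hFnonneg t).trans_lt hb)
    have : b ≤ lowerCDF D t := by
      rw [hF]
      calc b = (ENNReal.ofReal b).toReal := (ENNReal.toReal_ofReal hb0).symm
        _ ≤ (f t).toReal := ENNReal.toReal_mono (hfin t) this
    exact absurd hb (not_lt.2 this)
  refine ⟨hmono, ?_, ?_, ?_⟩
  · -- right continuity
    intro t
    rw [ContinuousWithinAt]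
    refine tendsto_order.2 ⟨fun a ha => ?_, fun b hb => ?_⟩
    · filter_upwards [self_mem_nhdsWithin] with s hs
      exact ha.trans_le (hmono hs)
    · obtain ⟨μ, hμ, hμb⟩ := hex t b hb
      haveI := hprob μ hμ
      have hanti : Antitone fun n : ℕ => Set.Iic (t + 1 / (n + 1)) := by
        intro m n hmn
        apply Iic_subset_Iic.2
        have : (1 : ℝ) / (n + 1) ≤ 1 / (m + 1) := by
          apply one_div_le_one_div_of_le (by positivity)
          exact_mod_cast by exact_mod_cast Nat.succ_le_succ hmn
        linarith
      have hiInter : ⋂ n : ℕ, Set.Iic (t + 1 / (n + 1)) = Set.Iic t := by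
        ext x
        simp only [Set.mem_iInter, Set.mem_Iic]
        constructor
        · intro h
          by_contra hx
          push_neg at hx
          obtain ⟨n, hn⟩ := exists_nat_one_div_lt (sub_pos.2 hx)
          have := h n
          linarith
        · intro h n
          have : (0:ℝ) < 1 / (n + 1) := by positivity
          linarith
      have htend : Tendsto (fun n : ℕ => μ (Set.Iic (t + 1 / (n + 1)))) atTop
          (𝓝 (μ (Set.Iic t))) := by
        have := tendsto_measure_iInter_atTop (μ := μ)
          (s := fun n : ℕ => Set.Iic (t + 1 / (n + 1)))
          (fun n => measurableSet_Iic.nullMeasurableSet) hanti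
          ⟨0, measure_ne_top μ _⟩
        rwa [hiInter] at this
      have htend' : Tendsto (fun n : ℕ => (μ (Set.Iic (t + 1 / (n + 1)))).toReal) atTop
          (𝓝 ((μ (Set.Iic t)).toReal)) :=
        (ENNReal.tendsto_toReal (measure_ne_top μ _)).comp htend
      obtain ⟨n, hn⟩ := (htend'.eventually_lt_const hμb).exists
      have hmem : Set.Ico t (t + 1 / (n + 1)) ∈ 𝓝[Set.Ici t] t :=
        Ico_mem_nhdsGE_of_mem ⟨le_refl t, lt_add_of_pos_right t (by positivity)⟩
      filter_upwards [hmem] with s hs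
      calc lowerCDF D s ≤ (μ (Set.Iic s)).toReal := hFle s μ hμ
        _ ≤ (μ (Set.Iic (t + 1 / (n + 1)))).toReal :=
            ENNReal.toReal_mono (measure_ne_top μ _)
              (measure_mono (Iic_subset_Iic.2 hs.2.le))
        _ < b := hn
  · -- limit at -∞
    refine tendsto_order.2 ⟨fun a ha => ?_, fun b hb => ?_⟩
    · exact Eventually.of_forall fun t => ha.trans_le (hFnonneg t)
    · obtain ⟨K, hK, hKle⟩ := htight (ENNReal.ofReal (b / 2))
        (ENNReal.ofReal_pos.2 (by linarith))
      obtain ⟨M, hM⟩ := hK.isBounded.subset_closedBall 0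
      rw [Real.closedBall_eq_Icc] at hM
      filter_upwards [eventually_lt_atBot (0 - M)] with t ht
      have hsub : Set.Iic t ⊆ Kᶜ := by
        intro x hx hxK
        have := (hM hxK).1
        simp only [Set.mem_Iic] at hx
        linarith
      have h1 : μ₀ (Set.Iic t) ≤ ENNReal.ofReal (b / 2) :=
        (measure_mono hsub).trans (hKle μ₀ hμ₀)
      have h2 : f t ≤ ENNReal.ofReal (b / 2) := (hle t μ₀ hμ₀).trans h1
      calc lowerCDF D t ≤ (ENNReal.ofReal (b / 2)).toReal :=
            ENNReal.toReal_mono ENNReal.ofReal_ne_top h2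
        _ = b / 2 := ENNReal.toReal_ofReal (by linarith)
        _ < b := by linarith
  · -- limit at +∞
    refine tendsto_order.2 ⟨fun a ha => ?_, fun b hb => ?_⟩
    · rcases lt_or_ge a 0 with ha0 | ha0
      · exact Eventually.of_forall fun t => ha0.trans_le (hFnonneg t)
      · set ε : ℝ := (1 - a) / 2 with hε
        have hε0 : 0 < ε := by rw [hε]; linarith
        obtain ⟨K, hK, hKle⟩ := htight (ENNReal.ofReal ε) (ENNReal.ofReal_pos.2 hε0)
        obtain ⟨M, hM⟩ := hK.isBounded.subset_closedBall 0
        rw [Real.closedBall_eq_Icc] at hM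
        filter_upwards [eventually_ge_atTop (0 + M)] with t ht
        have hsub : K ⊆ Set.Iic t := fun x hx => le_trans (hM hx).2 ht
        have hcover : Set.Iic t ∪ Kᶜ = Set.univ := by
          apply Set.eq_univ_of_forall
          intro x
          by_cases hx : x ∈ K
          · exact Or.inl (hsub hx)
          · exact Or.inr hx
        have hμineq : ∀ μ ∈ D, 1 - ENNReal.ofReal ε ≤ μ (Set.Iic t) := by
          intro μ hμ
          haveI := hprob μ hμ
          have : (1 : ℝ≥0∞) ≤ μ (Set.Iic t) + ENNReal.ofReal ε := by
            calc (1 : ℝ≥0∞) = μ Set.univ := (measure_univ (μ := μ)).symm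
              _ = μ (Set.Iic t ∪ Kᶜ) := by rw [hcover]
              _ ≤ μ (Set.Iic t) + μ Kᶜ := measure_union_le _ _
              _ ≤ μ (Set.Iic t) + ENNReal.ofReal ε := by
                  exact add_le_add_right (hKle μ hμ) _
          exact tsub_le_iff_right.2 this
        have hft : 1 - ENNReal.ofReal ε ≤ f t := le_iInf₂ hμineq
        have hεle : ENNReal.ofReal ε ≤ 1 := by
          rw [← ENNReal.ofReal_one]
          exact ENNReal.ofReal_le_ofReal (by rw [hε]; linarith)
        have : (1 - ENNReal.ofReal ε).toReal ≤ lowerCDF D t :=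
          ENNReal.toReal_mono (hfin t) hft
        have heq : (1 - ENNReal.ofReal ε).toReal = 1 - ε := by
          rw [ENNReal.toReal_sub_of_le hεle one_ne_top, ENNReal.toReal_one,
            ENNReal.toReal_ofReal hε0.le]
        rw [heq] at this
        have : a < 1 - ε := by rw [hε]; linarith
        linarith
    · exact Eventually.of_forall fun t => (hFone t).trans_lt hb

end
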